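/- Let O ⊆ {1,…,p}² be a union O = ⋃_{k=1}^K V_k × V_k of products of subsets V_k covering all singletons (each i ∈ some V_k). If some pair (i,j) with i ≠ j lies outside O, then there exist two distinct positive definite matrices Σ¹ ≠ Σ² that agree on all entries indexed by O. -/

import Mathlib

open Matrix

private lemma stdBasis_conjT {p : ℕ} (i j : Fin p) (c : ℝ) :
    (single i j c)ᴴ = single j i c := by
  ext a b
  simp [single, and_comm]

/-- Non-identifiability under graph-quilting observations: if the observed pair set
`O = ⋃ₖ Vₖ × Vₖ` covers every singleton but misses some off-diagonal pair `(i,j)`, then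
there exist two distinct positive definite matrices agreeing on all entries indexed by `O`. -/
theorem stmt18 {p K : ℕ} (V : Fin K → Set (Fin p))
    (hcover : ∀ i : Fin p, ∃ k, i ∈ V k)
    (i j : Fin p) (hij : i ≠ j)
    (hmiss : (i, j) ∉ ⋃ k, (V k) ×ˢ (V k)) :
    ∃ S₁ S₂ : Matrix (Fin p) (Fin p) ℝ, S₁.PosDef ∧ S₂.PosDef ∧ S₁ ≠ S₂ ∧
      ∀ a b : Fin p, (a, b) ∈ ⋃ k, (V k) ×ˢ (V k) → S₁ a b = S₂ a b := by
  classical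
  set M : Matrix (Fin p) (Fin p) ℝ :=
    single i j (1/2) + single j i (1/2) with hM
  refine ⟨1, 1 + M, Matrix.PosDef.one, ?_, ?_, ?_⟩
  · rw [posDef_iff_dotProduct_mulVec]
    constructor
    · show _ᴴ = _
      rw [hM, conjTranspose_add, conjTranspose_add, conjTranspose_one,
        stdBasis_conjT, stdBasis_conjT, add_comm (single j i _)]
    · intro x hx
      have h0 : x ⬝ᵥ x = ∑ k, x k ^ 2 := by simp [dotProduct, sq]
      have h1 : x ⬝ᵥ Function.update (0 : Fin p → ℝ) i (1/2 * x j) = x i * (1/2 * x j) := by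
        simp [dotProduct, Function.update, Finset.sum_ite_eq']
      have h2 : x ⬝ᵥ Function.update (0 : Fin p → ℝ) j (1/2 * x i) = x j * (1/2 * x i) := by
        simp [dotProduct, Function.update, Finset.sum_ite_eq']
      have hform : star x ⬝ᵥ ((1 + M) *ᵥ x) = (∑ k, x k ^ 2) + x i * x j := by
        simp only [hM, add_mulVec, one_mulVec, single_mulVec,
          dotProduct_add, star_trivial]
        rw [h0, h1, h2]; ring
      rw [hform]
      have hsum2 : x i ^ 2 + x j ^ 2 ≤ ∑ k, x k ^ 2 := by
        have : ∑ k ∈ ({i, j} : Finset (Fin p)), x k ^ 2 ≤ ∑ k, x k ^ 2 :=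
          Finset.sum_le_sum_of_subset_of_nonneg (Finset.subset_univ _)
            (fun k _ _ => sq_nonneg _)
        rwa [Finset.sum_pair hij] at this
      obtain ⟨k, hk⟩ := Function.ne_iff.mp hx
      have hpos : 0 < ∑ k, x k ^ 2 := by
        apply Finset.sum_pos' (fun k _ => sq_nonneg _)
        exact ⟨k, Finset.mem_univ _, (sq_abs (x k)) ▸ pow_pos (abs_pos.mpr hk) 2⟩
      nlinarith [sq_nonneg (x i + x j)]
  · intro h
    have := congrFun (congrFun h i) j
    simp only [hM, Matrix.add_apply, one_apply, single_apply_same,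
      if_neg hij] at this
    rw [single_apply_of_ne] at this
    · norm_num at this
    · tauto
  · intro a b hab
    simp only [Set.mem_iUnion, Set.mem_prod] at hab hmiss
    obtain ⟨k, ha, hb⟩ := hab
    have hne1 : ¬(i = a ∧ j = b) := by rintro ⟨rfl, rfl⟩; exact hmiss ⟨k, ha, hb⟩
    have hne2 : ¬(j = a ∧ i = b) := by rintro ⟨rfl, rfl⟩; exact hmiss ⟨k, hb, ha⟩
    simp only [hM, Matrix.add_apply, one_apply, single, of_apply]
    rw [if_neg hne1, if_neg hne2]
    ring
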